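/- For all integers m, n ≥ 1 and every l ≥ 1, one has Zeb(m,n)_l ⊴ Zeb(m,n)_{l+1}; consequently, for every k ≥ 1 the zebra chain (Zeb(m,n)_1, Zeb(m,n)_2, …, Zeb(m,n)_k) is a face chain in the permutahedron 𝕡^{mn}. -/

import Mathlib

/-- The weak-Bruhat comparison `τ ⊴ ρ` of (part-index encodings of) ordered
partitions of `{0,…,N−1}`: for all `i < j`, either `τ i < τ j` or `ρ i > ρ j`. -/
def OrdPartRel {N : ℕ} (τ ρ : Fin N → ℕ) : Prop :=
  ∀ i j : Fin N, i < j → τ i < τ j ∨ ρ j < ρ i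

/-- Identifying `i ∈ {0,…,mn−1}` with the grid point of row `r i = i / n` and
column `c i = i % n`, the value `v_l(i) = c i + (l−2)·(r i)` whose level sets
are the parts of the `l`-th zebra partition for `l ≥ 2`. -/
def zebVal (n l i : ℕ) : ℕ := i % n + (l - 2) * (i / n)

/-- The `l`-th term of the zebra chain, as an ordered partition of `{0,…,mn−1}`
encoded by its (0-based) part-index function.  For `l = 1` the parts are the
rows, ordered top to bottom, so the part index of `i` is its row `i / n`.
For `l ≥ 2` the parts are the level sets of `v_l`, ordered by decreasing
value, so the part index of `i` is the number of distinct values of `v_l`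
that are greater than `v_l(i)`. -/
def zeb (m n l : ℕ) : Fin (m * n) → ℕ := fun i =>
  if l = 1 then i.val / n
  else (((Finset.univ : Finset (Fin (m * n))).image fun j => zebVal n l j.val).filter
      fun x => zebVal n l i.val < x).card


lemma rank_strict {N : ℕ} (f : Fin N → ℕ) (i j : Fin N) (h : f j < f i) :
    ((Finset.univ.image f).filter (fun x => f i < x)).card <
      ((Finset.univ.image f).filter (fun x => f j < x)).card := by
  apply Finset.card_lt_card
  have hsub : (Finset.univ.image f).filter (fun x => f i < x) ⊆
      (Finset.univ.image f).filter (fun x => f j < x) := by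
    intro x hx
    simp only [Finset.mem_filter] at *
    exact ⟨hx.1, lt_trans h hx.2⟩
  refine (Finset.ssubset_iff_of_subset hsub).mpr ⟨f i, ?_, ?_⟩
  · simp only [Finset.mem_filter]
    exact ⟨Finset.mem_image_of_mem f (Finset.mem_univ i), h⟩
  · simp

lemma div_mod_lt {n i j : ℕ} (h : i < j) : i / n < j / n ∨ (i / n = j / n ∧ i % n < j % n) := by
  rcases lt_trichotomy (i / n) (j / n) with h1 | h1 | h1
  · left; exact h1
  · right
    refine ⟨h1, ?_⟩
    have e1 := Nat.div_add_mod i n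
    have e2 := Nat.div_add_mod j n
    have e3 : n * (i / n) = n * (j / n) := by rw [h1]
    omega
  · have := Nat.div_le_div_right (c := n) h.le; omega

lemma zebra_main (m n : ℕ) (l : ℕ) (hl : 1 ≤ l) :
    OrdPartRel (zeb m n l) (zeb m n (l + 1)) := by
  intro i j hij
  have hij' : (i : ℕ) < j := hij
  rcases div_mod_lt (n := n) hij' with hr | ⟨hr, hc⟩
  · -- rows differ
    by_cases hl1 : l = 1
    · subst hl1
      left
      simp only [zeb, if_pos rfl]
      exact hr
    · have h2 : 2 ≤ l := by omega
      by_cases hv : zebVal n l j.val < zebVal n l i.val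
      · left
        simp only [zeb, if_neg hl1]
        exact rank_strict (fun k => zebVal n l k.val) i j hv
      · right
        have hne : l + 1 ≠ 1 := by omega
        simp only [zeb, if_neg hne]
        apply rank_strict (fun k => zebVal n (l + 1) k.val) j i
        have e1 : (l + 1 - 2) * (i.val / n) = (l - 2) * (i.val / n) + (i.val / n) := by
          have : l + 1 - 2 = (l - 2) + 1 := by omega
          rw [this, Nat.succ_mul]
        have e2 : (l + 1 - 2) * (j.val / n) = (l - 2) * (j.val / n) + (j.val / n) := by
          have : l + 1 - 2 = (l - 2) + 1 := by omega
          rw [this, Nat.succ_mul]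
        simp only [zebVal] at *
        omega
  · -- same row, columns differ
    right
    have hne : l + 1 ≠ 1 := by omega
    simp only [zeb, if_neg hne]
    apply rank_strict (fun k => zebVal n (l + 1) k.val) j i
    have e3 : (l + 1 - 2) * (i.val / n) = (l + 1 - 2) * (j.val / n) := by rw [hr]
    simp only [zebVal]
    omega

/-- For all `m, n ≥ 1` and every `l ≥ 1`, one has `Zeb(m,n)_l ⊴ Zeb(m,n)_{l+1}`;
consequently, for every `k ≥ 1` the zebra chain `Zeb(m,n)_1, …, Zeb(m,n)_k` is
a face chain in the permutahedron `𝕡^{mn}`. -/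
theorem zebra_is_face_chain (m n : ℕ) (hm : 1 ≤ m) (hn : 1 ≤ n) :
    (∀ l : ℕ, 1 ≤ l → OrdPartRel (zeb m n l) (zeb m n (l + 1))) ∧
    (∀ k : ℕ, 1 ≤ k → List.Chain' OrdPartRel ((List.range' 1 k).map (zeb m n))) := by
  
  refine ⟨fun l hl => zebra_main m n l hl, fun k hk => ?_⟩
  unfold List.Chain'
  rw [List.isChain_map, List.isChain_iff_getElem]
  intro i h
  simp only [List.get_eq_getElem, List.getElem_range']
  have : 1 + 1 * (i + 1) = (1 + 1 * i) + 1 := by ring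
  rw [this]
  exact zebra_main m n (1 + 1 * i) (by omega)
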